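/- Let g₁, g₂, g₃ ∈ SU(2) and set g₀ = 1 (the identity matrix). Let G be the real symmetric 4×4 matrix with entries G_IJ = (1/2)·Re tr(g_J g_I⁻¹) for I,J ∈ {0,1,2,3} (so G_II = 1). Then det G = (1/16)·( Re tr( (g₁g₂ − g₂g₁)·g₃ ) )². -/

import Mathlib

open Matrix Complex

lemma su2_form (A : Matrix.specialUnitaryGroup (Fin 2) ℂ) :
    ∃ a b : ℂ, (A : Matrix (Fin 2) (Fin 2) ℂ) = !![a, b; -(starRingEnd ℂ) b, (starRingEnd ℂ) a]
      ∧ a.re ^ 2 + a.im ^ 2 + b.re ^ 2 + b.im ^ 2 = 1 := by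
  obtain ⟨hu, hd⟩ := (Matrix.mem_specialUnitaryGroup_iff.mp A.2)
  set M := (A : Matrix (Fin 2) (Fin 2) ℂ)
  have hinv : M⁻¹ = star M := by
    rw [Matrix.inv_eq_left_inv]
    exact (Matrix.mem_unitaryGroup_iff'.mp hu)
  have hadj : M⁻¹ = M.adjugate := by
    rw [Matrix.inv_def, hd]; simp
  have h := hinv.symm.trans hadj
  have h10 : (starRingEnd ℂ) (M 0 1) = -(M 1 0) := by
    have := congrFun (congrFun h 1) 0
    simpa [Matrix.adjugate_fin_two, Matrix.star_apply] using this
  have h11 : (starRingEnd ℂ) (M 0 0) = M 1 1 := by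
    have := congrFun (congrFun h 0) 0
    simpa [Matrix.adjugate_fin_two, Matrix.star_apply] using this
  refine ⟨M 0 0, M 0 1, ?_, ?_⟩
  · ext i j
    fin_cases i <;> fin_cases j <;> simp [h10, h11]
  · have hdet : M 0 0 * M 1 1 - M 0 1 * M 1 0 = 1 := by
      rw [← Matrix.det_fin_two]; exact hd
    have h10' : M 1 0 = -(starRingEnd ℂ) (M 0 1) := by rw [h10]; ring
    rw [← h11, h10'] at hdet
    have := congrArg Complex.re hdet
    simp [Complex.mul_re, Complex.conj_re, Complex.conj_im] at this
    nlinarith [this]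

lemma inv_su2 (a b : ℂ) (h : a.re ^ 2 + a.im ^ 2 + b.re ^ 2 + b.im ^ 2 = 1) :
    (!![a, b; -(starRingEnd ℂ) b, (starRingEnd ℂ) a])⁻¹ =
      !![(starRingEnd ℂ) a, -b; (starRingEnd ℂ) b, a] := by
  have hdet : (!![a, b; -(starRingEnd ℂ) b, (starRingEnd ℂ) a]).det = 1 := by
    rw [Matrix.det_fin_two_of]
    apply Complex.ext <;>
      simp [Complex.mul_re, Complex.mul_im, Complex.conj_re, Complex.conj_im] <;> nlinarith [h]
  rw [Matrix.inv_def, hdet, Matrix.adjugate_fin_two]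
  simp

lemma det_fin_four (A : Matrix (Fin 4) (Fin 4) ℝ) :
    A.det =
      A 0 0 * (A 1 1 * (A 2 2 * A 3 3 - A 2 3 * A 3 2) - A 1 2 * (A 2 1 * A 3 3 - A 2 3 * A 3 1)
        + A 1 3 * (A 2 1 * A 3 2 - A 2 2 * A 3 1)) -
      A 0 1 * (A 1 0 * (A 2 2 * A 3 3 - A 2 3 * A 3 2) - A 1 2 * (A 2 0 * A 3 3 - A 2 3 * A 3 0)
        + A 1 3 * (A 2 0 * A 3 2 - A 2 2 * A 3 0)) +
      A 0 2 * (A 1 0 * (A 2 1 * A 3 3 - A 2 3 * A 3 1) - A 1 1 * (A 2 0 * A 3 3 - A 2 3 * A 3 0)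
        + A 1 3 * (A 2 0 * A 3 1 - A 2 1 * A 3 0)) -
      A 0 3 * (A 1 0 * (A 2 1 * A 3 2 - A 2 2 * A 3 1) - A 1 1 * (A 2 0 * A 3 2 - A 2 2 * A 3 0)
        + A 1 2 * (A 2 0 * A 3 1 - A 2 1 * A 3 0)) := by
  rw [Matrix.det_succ_row_zero]
  simp [Fin.sum_univ_succ, Matrix.det_fin_three, Matrix.submatrix_apply, Fin.succAbove,
    show (Fin.succ 2 : Fin 4) = 3 from rfl, show Fin.castSucc (2 : Fin 3) = 2 from rfl,
    show Fin.castSucc (1 : Fin 3) = 1 from rfl, show Fin.castSucc (0 : Fin 3) = 0 from rfl,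
    show (Fin.succ 1 : Fin 4) = 2 from rfl, show (Fin.succ 0 : Fin 4) = 1 from rfl]
  ring

noncomputable section

set_option maxHeartbeats 1000000

/-- For `g₁, g₂, g₃ ∈ SU(2)` and `g₀ = 1`, the determinant of the 4×4
Graham matrix `G_IJ = (1/2)·Re tr(g_J g_I⁻¹)` equals
`(1/16)·(Re tr([g₁,g₂] g₃))²`. -/
theorem stmt9 (g₁ g₂ g₃ : Matrix.specialUnitaryGroup (Fin 2) ℂ)
    (gm : Fin 4 → Matrix (Fin 2) (Fin 2) ℂ)
    (hgm : gm = ![1, (g₁ : Matrix (Fin 2) (Fin 2) ℂ), (g₂ : Matrix (Fin 2) (Fin 2) ℂ),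
      (g₃ : Matrix (Fin 2) (Fin 2) ℂ)])
    (G : Matrix (Fin 4) (Fin 4) ℝ)
    (hG : ∀ I J, G I J = 1 / 2 * ((gm J * (gm I)⁻¹).trace).re) :
    G.det = 1 / 16 *
      (((g₁ : Matrix (Fin 2) (Fin 2) ℂ) * (g₂ : Matrix (Fin 2) (Fin 2) ℂ) -
          (g₂ : Matrix (Fin 2) (Fin 2) ℂ) * (g₁ : Matrix (Fin 2) (Fin 2) ℂ)) *
        (g₃ : Matrix (Fin 2) (Fin 2) ℂ)).trace.re ^ 2 := by
  obtain ⟨a₁, b₁, hg1, hn1⟩ := su2_form g₁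
  obtain ⟨a₂, b₂, hg2, hn2⟩ := su2_form g₂
  obtain ⟨a₃, b₃, hg3, hn3⟩ := su2_form g₃
  set M : Matrix (Fin 4) (Fin 4) ℝ :=
    !![1, 0, 0, 0;
       a₁.re, a₁.im, b₁.re, b₁.im;
       a₂.re, a₂.im, b₂.re, b₂.im;
       a₃.re, a₃.im, b₃.re, b₃.im] with hM
  set T : Matrix (Fin 4) (Fin 4) ℝ :=
    !![1, a₁.re, a₂.re, a₃.re;
       0, a₁.im, a₂.im, a₃.im;
       0, b₁.re, b₂.re, b₃.re;
       0, b₁.im, b₂.im, b₃.im] with hT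
  have hGM : G = M * T := by
    ext I J
    rw [hG]
    fin_cases I <;> fin_cases J <;>
      simp [hgm, hg1, hg2, hg3, inv_su2 _ _ hn1, inv_su2 _ _ hn2, inv_su2 _ _ hn3,
        Matrix.mul_apply, Matrix.trace_fin_two, Fin.sum_univ_two, Fin.sum_univ_four,
        Matrix.transpose_apply, hM, Complex.mul_re, Complex.conj_re, Complex.conj_im,
        Complex.add_re, Matrix.cons_val_zero, Matrix.cons_val_one, Matrix.cons_val_two,
        Matrix.cons_val_three, Matrix.head_cons, Matrix.tail_cons, Matrix.head_fin_const, Matrix.vecHead, Matrix.vecTail, Function.comp,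
        hT, Complex.neg_re, Complex.neg_im, Complex.sub_re, Complex.sub_im, Complex.mul_im,
        Complex.add_im] <;>
      first
        | ring
        | linear_combination hn1
        | linear_combination hn2
        | linear_combination hn3
  rw [hGM, Matrix.det_mul, hg1, hg2, hg3, det_fin_four M, det_fin_four T]
  simp only [hM, hT, Matrix.mul_apply, Matrix.head_fin_const, Complex.add_im, Complex.sub_im, Matrix.trace_fin_two, Fin.sum_univ_two, Matrix.sub_apply,
    Complex.sub_re, Complex.add_re, Complex.mul_re, Complex.mul_im, Complex.conj_re,
    Complex.conj_im, Complex.neg_re, Complex.neg_im, Matrix.cons_val_zero, Matrix.cons_val_one,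
    Matrix.cons_val_two, Matrix.cons_val_three, Matrix.head_cons, Matrix.tail_cons,
    Matrix.cons_val', Matrix.empty_val', Matrix.cons_val_fin_one, Matrix.of_apply]
  ring
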